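/- Let L be an n×n real symmetric matrix whose eigenvalues all lie in [−4, 0], let γ > 0, and let Z be an n×T real matrix. Define f(k̄) = ‖(I + γ(k̄ I + L)²)^{−1/2} Z‖₂ for k̄ ∈ [0, 4]. Then f is Lipschitz continuous on [0, 4] with Lipschitz constant L_{k̄} satisfying: L_{k̄} ≤ (2/(3√3))·√γ·‖Z‖₂ if γ ≥ 1/32, and L_{k̄} ≤ 4γ(1 + 16γ)^{−3/2}·‖Z‖₂ if γ < 1/32; in either case L_{k̄} ≤ (2/(3√3))·√γ·‖Z‖₂. -/

import Mathlib

open Matrix Filter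
open scoped Classical

/-- Euclidean norm of a vector. -/
noncomputable def euclNorm {n : Type*} [Fintype n] (v : n → ℝ) : ℝ :=
  Real.sqrt (∑ i, v i ^ 2)

/-- Spectral norm (largest singular value) of a matrix: the supremum of
`‖M x‖₂` over the Euclidean unit ball. -/
noncomputable def specNorm {m n : Type*} [Fintype m] [Fintype n] (M : Matrix m n ℝ) : ℝ :=
  sSup {y | ∃ x : n → ℝ, euclNorm x ≤ 1 ∧ y = euclNorm (M.mulVec x)}

/-- `A^{-1/2}`: the inverse of the positive semidefinite square root of `A`
(junk value `0` if `A` is not positive semidefinite). -/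
noncomputable def invSqrt {n : Type*} [Fintype n] [DecidableEq n]
    (A : Matrix n n ℝ) : Matrix n n ℝ :=
  if h : A.PosSemidef then
    (h.1.eigenvectorUnitary.1 * diagonal ((↑) ∘ (√·) ∘ h.1.eigenvalues) *
      (star h.1.eigenvectorUnitary : Matrix n n ℝ))⁻¹ else 0

/-- Squared Frobenius norm helper via entries, and Frobenius norm. -/
noncomputable def frobNorm {m n : Type*} [Fintype m] [Fintype n] (M : Matrix m n ℝ) : ℝ :=
  Real.sqrt (∑ i, ∑ j, M i j ^ 2)

/-- Frobenius (trace) inner product. -/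
noncomputable def frobInner {m n : Type*} [Fintype m] [Fintype n]
    (A B : Matrix m n ℝ) : ℝ :=
  ∑ i, ∑ j, A i j * B i j

/-! ### Auxiliary scalar analysis -/

namespace Stmt12Aux

noncomputable def hh (γ t : ℝ) : ℝ := (Real.sqrt (1 + γ * t^2))⁻¹
noncomputable def hd (γ t : ℝ) : ℝ := -(γ * t) * (1 + γ * t^2) ^ (-(3/2) : ℝ)

lemma base_pos {γ : ℝ} (hγ : 0 < γ) (t : ℝ) : (0:ℝ) < 1 + γ * t^2 := by positivity

lemma hh_eq {γ : ℝ} (hγ : 0 < γ) (t : ℝ) : hh γ t = (1 + γ * t^2) ^ (-(1/2) : ℝ) := by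
  rw [hh, Real.rpow_neg (base_pos hγ t).le, ← Real.sqrt_eq_rpow]

lemma hasDerivAt_hh {γ : ℝ} (hγ : 0 < γ) (t : ℝ) : HasDerivAt (hh γ) (hd γ t) t := by
  have h1 : HasDerivAt (fun t : ℝ => 1 + γ * t^2) (γ * (2 * t)) t := by
    simpa using ((hasDerivAt_pow 2 t).const_mul γ).const_add 1
  have h2 := (Real.hasDerivAt_rpow_const (p := -(1/2))
      (Or.inl (base_pos hγ t).ne')).comp t h1
  have heq : (fun t : ℝ => (1 + γ * t^2) ^ (-(1/2) : ℝ)) = hh γ := by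
    funext s; rw [hh_eq hγ]
  rw [← heq]
  refine h2.congr_deriv ?_
  rw [hd, show (-(1/2) : ℝ) - 1 = -(3/2) by norm_num]
  ring

lemma rpow_neg32 {x : ℝ} (hx : 0 < x) : x ^ (-(3/2) : ℝ) = ((Real.sqrt x)^3)⁻¹ := by
  rw [Real.rpow_neg hx.le]
  congr 1
  rw [show ((3:ℝ)/2) = (1/2) * (3:ℕ) by norm_num, Real.rpow_mul hx.le,
    Real.rpow_natCast, ← Real.sqrt_eq_rpow]

lemma abs_hd {γ : ℝ} (hγ : 0 < γ) (t : ℝ) :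
    |hd γ t| = γ * |t| * ((Real.sqrt (1 + γ * t^2))^3)⁻¹ := by
  rw [hd, rpow_neg32 (base_pos hγ t), abs_mul, abs_neg, abs_mul,
    abs_of_nonneg hγ.le, abs_inv,
    abs_of_nonneg (pow_nonneg (Real.sqrt_nonneg _) 3)]

lemma bound_global {γ : ℝ} (hγ : 0 < γ) (t : ℝ) :
    |hd γ t| ≤ 2 / (3 * Real.sqrt 3) * Real.sqrt γ := by
  have hb := base_pos hγ t
  have hs : (0:ℝ) < Real.sqrt (1 + γ * t^2) := Real.sqrt_pos.mpr hb
  obtain ⟨s, hsdef⟩ : ∃ s, s = Real.sqrt (1 + γ * t^2) := ⟨_, rfl⟩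
  have hs2 : s^2 = 1 + γ * t^2 := by rw [hsdef]; exact Real.sq_sqrt hb.le
  have hspos : 0 < s := hsdef ▸ hs
  obtain ⟨g, hgdef⟩ : ∃ g, g = Real.sqrt γ := ⟨_, rfl⟩
  have hg : g^2 = γ := by rw [hgdef]; exact Real.sq_sqrt hγ.le
  have hgpos : 0 < g := by rw [hgdef]; exact Real.sqrt_pos.mpr hγ
  obtain ⟨r, hrdef⟩ : ∃ r, r = Real.sqrt 3 := ⟨_, rfl⟩
  have hr : r^2 = 3 := by rw [hrdef]; exact Real.sq_sqrt (by norm_num)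
  have hrpos : 0 < r := by rw [hrdef]; exact Real.sqrt_pos.mpr (by norm_num)
  rw [abs_hd hγ, ← hsdef, ← hgdef, ← hrdef]
  have hu2 : (g * |t|)^2 = γ * t^2 := by rw [mul_pow, hg, sq_abs]
  have hunn : (0:ℝ) ≤ g * |t| := by positivity
  have key : 3 * r * (g * |t|) ≤ 2 * s^3 := by
    have h27 : (3 * r * (g * |t|))^2 ≤ (2 * s^3)^2 := by
      have e1 : (3 * r * (g * |t|))^2 = 27 * (γ * t^2) := by
        rw [mul_pow, mul_pow, hr, hu2]; ring
      have e2 : (2 * s^3)^2 = 4 * (1 + γ * t^2)^3 := by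
        rw [show (2*s^3)^2 = 4 * (s^2)^3 by ring, hs2]
      rw [e1, e2]
      nlinarith [mul_nonneg (sq_nonneg (2*(γ*t^2) - 1)) (mul_nonneg hγ.le (sq_nonneg t)),
        sq_nonneg (2*(γ*t^2) - 1), mul_nonneg hγ.le (sq_nonneg t)]
    have := Real.sqrt_le_sqrt h27
    rwa [Real.sqrt_sq (by positivity), Real.sqrt_sq (by positivity)] at this
  rw [mul_inv_le_iff₀ (by positivity)]
  have hgt : γ * |t| = g * (g * |t|) := by rw [← hg]; ring
  have h3 : 2 / (3 * r) * g * s ^ 3 = (g * (2 * s^3)) / (3 * r) := by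
    field_simp
  rw [hgt, h3, le_div_iff₀ (by positivity)]
  calc g * (g * |t|) * (3 * r) = g * (3 * r * (g * |t|)) := by ring
    _ ≤ g * (2 * s^3) := by
        exact mul_le_mul_of_nonneg_left key hgpos.le

lemma bound_small {γ : ℝ} (hγ : 0 < γ) (hγ' : γ ≤ 1/32) {t : ℝ} (ht : |t| ≤ 4) :
    |hd γ t| ≤ 4 * γ * (1 + 16 * γ) ^ (-(3/2) : ℝ) := by
  have hb := base_pos hγ t
  have hb' : (0:ℝ) < 1 + 16 * γ := by linarith
  rw [abs_hd hγ, rpow_neg32 hb']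
  obtain ⟨q, hqdef⟩ : ∃ q, q = Real.sqrt (1 + γ * t^2) := ⟨_, rfl⟩
  obtain ⟨p, hpdef⟩ : ∃ p, p = Real.sqrt (1 + 16*γ) := ⟨_, rfl⟩
  have hq2 : q^2 = 1 + γ * t^2 := by rw [hqdef]; exact Real.sq_sqrt hb.le
  have hp2 : p^2 = 1 + 16*γ := by rw [hpdef]; exact Real.sq_sqrt hb'.le
  have hqpos : 0 < q := by rw [hqdef]; exact Real.sqrt_pos.mpr hb
  have hppos : 0 < p := by rw [hpdef]; exact Real.sqrt_pos.mpr hb'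
  rw [← hqdef, ← hpdef, mul_inv_le_iff₀ (by positivity)]
  have h3 : 4 * γ * (p ^ 3)⁻¹ * q ^ 3 = (4 * γ * q^3) / p^3 := by ring
  rw [h3, le_div_iff₀ (by positivity)]
  have key : |t| * p^3 ≤ 4 * q^3 := by
    have hsq : (|t| * p^3)^2 ≤ (4 * q^3)^2 := by
      have e1 : (|t| * p^3)^2 = t^2 * (1+16*γ)^3 := by
        rw [mul_pow, show (p^3)^2 = (p^2)^3 by ring, hp2, sq_abs]
      have e2 : (4 * q^3)^2 = 16 * (1 + γ*t^2)^3 := by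
        rw [mul_pow, show (q^3)^2 = (q^2)^3 by ring, hq2]; norm_num
      rw [e1, e2]
      have hx : t^2 ≤ 16 := by nlinarith [sq_abs t, abs_nonneg t]
      have hfact : 16 * (1 + γ*t^2)^3 - t^2*(1+16*γ)^3
          = (16 - t^2) * (1 - 48*γ^2*t^2 - 16*γ^3*(t^2)^2 - 256*γ^3*t^2) := by ring
      have hbr : 0 ≤ 1 - 48*γ^2*t^2 - 16*γ^3*(t^2)^2 - 256*γ^3*t^2 := by
        nlinarith [sq_nonneg t, mul_nonneg (mul_nonneg hγ.le hγ.le) (sq_nonneg t),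
          mul_nonneg (mul_nonneg (mul_nonneg hγ.le hγ.le) hγ.le) (sq_nonneg t),
          sq_nonneg (t^2), mul_nonneg hγ.le (sq_nonneg t)]
      nlinarith [mul_nonneg (by linarith : (0:ℝ) ≤ 16 - t^2) hbr]
    have := Real.sqrt_le_sqrt hsq
    rwa [Real.sqrt_sq (by positivity), Real.sqrt_sq (by positivity)] at this
  calc γ * |t| * p^3 = γ * (|t| * p^3) := by ring
    _ ≤ γ * (4 * q^3) := mul_le_mul_of_nonneg_left key hγ.le
    _ = 4 * γ * q^3 := by ring

lemma hh_lip {γ : ℝ} (hγ : 0 < γ) {c : ℝ} (hc : ∀ t ∈ Set.Icc (-4:ℝ) 4, |hd γ t| ≤ c)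
    {s t : ℝ} (hs : s ∈ Set.Icc (-4:ℝ) 4) (ht : t ∈ Set.Icc (-4:ℝ) 4) :
    |hh γ s - hh γ t| ≤ c * |s - t| := by
  have := (convex_Icc (-4:ℝ) 4).norm_image_sub_le_of_norm_hasDerivWithin_le
    (f := hh γ) (f' := hd γ)
    (fun x hx => (hasDerivAt_hh hγ x).hasDerivWithinAt)
    (fun x hx => by rw [Real.norm_eq_abs]; exact hc x hx) ht hs
  simpa [Real.norm_eq_abs] using this

/-! ### Euclidean and spectral norm lemmas -/

section Aux
variable {n m : Type*} [Fintype n] [Fintype m]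

lemma euclNorm_eq_norm (v : n → ℝ) :
    euclNorm v = ‖(WithLp.equiv 2 (n → ℝ)).symm v‖ := by
  rw [euclNorm, EuclideanSpace.norm_eq]
  congr 1
  refine Finset.sum_congr rfl fun i _ => ?_
  rw [Real.norm_eq_abs, sq_abs]
  rfl

lemma euclNorm_nonneg (v : n → ℝ) : 0 ≤ euclNorm v := Real.sqrt_nonneg _

lemma euclNorm_zero : euclNorm (0 : n → ℝ) = 0 := by simp [euclNorm]

lemma euclNorm_add_le (v w : n → ℝ) : euclNorm (v + w) ≤ euclNorm v + euclNorm w := by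
  rw [euclNorm_eq_norm, euclNorm_eq_norm, euclNorm_eq_norm]
  rw [show (WithLp.equiv 2 (n → ℝ)).symm (v + w)
      = (WithLp.equiv 2 (n → ℝ)).symm v + (WithLp.equiv 2 (n → ℝ)).symm w from rfl]
  exact norm_add_le _ _

lemma sq_euclNorm (v : n → ℝ) : euclNorm v ^ 2 = ∑ i, v i ^ 2 :=
  Real.sq_sqrt (Finset.sum_nonneg fun _ _ => sq_nonneg _)

lemma sum_sq_le_one {x : n → ℝ} (hx : euclNorm x ≤ 1) : ∑ i, x i ^ 2 ≤ 1 := by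
  rw [← sq_euclNorm]
  nlinarith [euclNorm_nonneg x]

lemma euclNorm_mulVec_le (M : Matrix m n ℝ) {x : n → ℝ} (hx : euclNorm x ≤ 1) :
    euclNorm (M *ᵥ x) ≤ Real.sqrt (∑ i, ∑ j, M i j ^ 2) := by
  rw [euclNorm]
  apply Real.sqrt_le_sqrt
  refine Finset.sum_le_sum fun i _ => ?_
  calc (M *ᵥ x) i ^ 2 = (∑ j, M i j * x j) ^ 2 := rfl
    _ ≤ (∑ j, M i j ^ 2) * ∑ j, x j ^ 2 := Finset.sum_mul_sq_le_sq_mul_sq _ _ _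
    _ ≤ (∑ j, M i j ^ 2) * 1 := by
        exact mul_le_mul_of_nonneg_left (sum_sq_le_one hx)
          (Finset.sum_nonneg fun j _ => sq_nonneg _)
    _ = ∑ j, M i j ^ 2 := mul_one _

lemma specSet_nonempty (M : Matrix m n ℝ) :
    {y | ∃ x : n → ℝ, euclNorm x ≤ 1 ∧ y = euclNorm (M.mulVec x)}.Nonempty :=
  ⟨euclNorm (M *ᵥ (0 : n → ℝ)), 0, by rw [euclNorm_zero]; norm_num, rfl⟩

lemma specSet_bddAbove (M : Matrix m n ℝ) :
    BddAbove {y | ∃ x : n → ℝ, euclNorm x ≤ 1 ∧ y = euclNorm (M.mulVec x)} := by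
  refine ⟨Real.sqrt (∑ i, ∑ j, M i j ^ 2), ?_⟩
  rintro y ⟨x, hx, rfl⟩
  exact euclNorm_mulVec_le M hx

lemma le_specNorm (M : Matrix m n ℝ) {x : n → ℝ} (hx : euclNorm x ≤ 1) :
    euclNorm (M *ᵥ x) ≤ specNorm M :=
  le_csSup (specSet_bddAbove M) ⟨x, hx, rfl⟩

lemma specNorm_le (M : Matrix m n ℝ) {c : ℝ}
    (h : ∀ x : n → ℝ, euclNorm x ≤ 1 → euclNorm (M *ᵥ x) ≤ c) : specNorm M ≤ c := by
  refine csSup_le (specSet_nonempty M) ?_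
  rintro y ⟨x, hx, rfl⟩
  exact h x hx

end Aux

section Unitary
variable {n : Type*} [Fintype n] [DecidableEq n]

lemma euclNorm_mulVec_orth {U : Matrix n n ℝ} (h : Uᵀ * U = 1) (v : n → ℝ) :
    euclNorm (U *ᵥ v) = euclNorm v := by
  unfold euclNorm
  congr 1
  have key : ∀ x : n → ℝ, ∑ i, x i ^ 2 = x ⬝ᵥ x := by
    intro x; simp [dotProduct, sq]
  rw [key, key]
  calc (U *ᵥ v) ⬝ᵥ (U *ᵥ v) = ((U *ᵥ v) ᵥ* U) ⬝ᵥ v := dotProduct_mulVec _ _ _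
    _ = v ⬝ᵥ v := by
        rw [show U *ᵥ v = v ᵥ* Uᵀ from (vecMul_transpose _ _).symm,
          vecMul_vecMul, h, vecMul_one]

lemma euclNorm_mulVec_diagonal_le {d : n → ℝ} {c : ℝ} (hc : 0 ≤ c)
    (h : ∀ i, |d i| ≤ c) (v : n → ℝ) :
    euclNorm ((diagonal d) *ᵥ v) ≤ c * euclNorm v := by
  unfold euclNorm
  rw [← Real.sqrt_sq hc, ← Real.sqrt_mul (sq_nonneg c)]
  apply Real.sqrt_le_sqrt
  rw [Finset.mul_sum]
  refine Finset.sum_le_sum fun i _ => ?_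
  rw [mulVec_diagonal]
  have h2 : d i ^ 2 ≤ c ^ 2 := by nlinarith [sq_abs (d i), abs_nonneg (d i), h i]
  calc (d i * v i) ^ 2 = d i ^ 2 * v i ^ 2 := by ring
    _ ≤ c ^ 2 * v i ^ 2 := mul_le_mul_of_nonneg_right h2 (sq_nonneg _)

lemma euclNorm_conj_mulVec_le {U : Matrix n n ℝ} (h1 : Uᵀ * U = 1) (h2 : U * Uᵀ = 1)
    {d : n → ℝ} {c : ℝ} (hc : 0 ≤ c) (hd : ∀ i, |d i| ≤ c) (v : n → ℝ) :
    euclNorm ((U * diagonal d * Uᵀ) *ᵥ v) ≤ c * euclNorm v := by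
  rw [← mulVec_mulVec, ← mulVec_mulVec]
  rw [euclNorm_mulVec_orth h1]
  calc euclNorm (diagonal d *ᵥ (Uᵀ *ᵥ v)) ≤ c * euclNorm (Uᵀ *ᵥ v) :=
        euclNorm_mulVec_diagonal_le hc hd _
    _ = c * euclNorm v := by
        rw [euclNorm_mulVec_orth (by rwa [transpose_transpose]) v]

end Unitary

/-! ### Spectral representation -/

section Spec
variable {n : ℕ}

lemma conj_diag_mul {U : Matrix (Fin n) (Fin n) ℝ} (h1 : Uᵀ * U = 1) (d e : Fin n → ℝ) :
    (U * diagonal d * Uᵀ) * (U * diagonal e * Uᵀ)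
      = U * diagonal (fun i => d i * e i) * Uᵀ := by
  rw [← diagonal_mul_diagonal]
  simp only [Matrix.mul_assoc]
  rw [← Matrix.mul_assoc Uᵀ U, h1, Matrix.one_mul]

lemma star_eigU {L : Matrix (Fin n) (Fin n) ℝ} (hL : L.IsHermitian) :
    (star (hL.eigenvectorUnitary : Matrix (Fin n) (Fin n) ℝ))
      = (hL.eigenvectorUnitary : Matrix (Fin n) (Fin n) ℝ)ᵀ := by
  rw [Matrix.star_eq_conjTranspose, conjTranspose_eq_transpose_of_trivial]

lemma hU1 {L : Matrix (Fin n) (Fin n) ℝ} (hL : L.IsHermitian) :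
    (hL.eigenvectorUnitary : Matrix (Fin n) (Fin n) ℝ)ᵀ
      * (hL.eigenvectorUnitary : Matrix (Fin n) (Fin n) ℝ) = 1 := by
  rw [← star_eigU hL]
  exact Matrix.mem_unitaryGroup_iff'.mp hL.eigenvectorUnitary.2

lemma hU2 {L : Matrix (Fin n) (Fin n) ℝ} (hL : L.IsHermitian) :
    (hL.eigenvectorUnitary : Matrix (Fin n) (Fin n) ℝ)
      * (hL.eigenvectorUnitary : Matrix (Fin n) (Fin n) ℝ)ᵀ = 1 := by
  rw [← star_eigU hL]
  exact Matrix.mem_unitaryGroup_iff.mp hL.eigenvectorUnitary.2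

lemma L_repr {L : Matrix (Fin n) (Fin n) ℝ} (hL : L.IsHermitian) :
    L = (hL.eigenvectorUnitary : Matrix (Fin n) (Fin n) ℝ) * diagonal hL.eigenvalues
      * (hL.eigenvectorUnitary : Matrix (Fin n) (Fin n) ℝ)ᵀ := by
  have hdiag : diagonal (RCLike.ofReal ∘ hL.eigenvalues) = diagonal hL.eigenvalues := by
    congr 1
  conv_lhs => rw [Matrix.IsHermitian.spectral_theorem hL]
  rw [Unitary.conjStarAlgAut_apply, star_eigU hL, hdiag]

lemma A_repr {L : Matrix (Fin n) (Fin n) ℝ} (hL : L.IsHermitian) (γ k : ℝ) :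
    (1 : Matrix (Fin n) (Fin n) ℝ) + γ • (k • (1 : Matrix (Fin n) (Fin n) ℝ) + L) ^ 2
      = (hL.eigenvectorUnitary : Matrix (Fin n) (Fin n) ℝ)
        * diagonal (fun i => 1 + γ * (k + hL.eigenvalues i)^2)
        * (hL.eigenvectorUnitary : Matrix (Fin n) (Fin n) ℝ)ᵀ := by
  set U : Matrix (Fin n) (Fin n) ℝ := (hL.eigenvectorUnitary : Matrix (Fin n) (Fin n) ℝ) with hU
  set lam := hL.eigenvalues with hlam
  have e2 : k • (1 : Matrix (Fin n) (Fin n) ℝ) + L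
      = U * diagonal (fun i => k + lam i) * Uᵀ := by
    have hsplit : diagonal (fun i => k + lam i)
        = k • (1 : Matrix (Fin n) (Fin n) ℝ) + diagonal lam := by
      rw [Matrix.smul_one_eq_diagonal, diagonal_add]
    rw [hsplit, Matrix.mul_add, Matrix.add_mul, ← L_repr hL]
    congr 1
    rw [Matrix.mul_smul, Matrix.smul_mul, Matrix.mul_one, hU2 hL]
  have e3 : (k • (1 : Matrix (Fin n) (Fin n) ℝ) + L) ^ 2
      = U * diagonal (fun i => (k + lam i)^2) * Uᵀ := by
    rw [pow_two, e2, conj_diag_mul (hU1 hL)]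
    have : (fun i => (k + lam i) * (k + lam i)) = (fun i => (k + lam i)^2) := by
      funext i; ring
    rw [this]
  have e4 : (1 : Matrix (Fin n) (Fin n) ℝ)
      = U * diagonal (fun _ => (1:ℝ)) * Uᵀ := by
    rw [show diagonal (fun _ => (1:ℝ)) = (1 : Matrix (Fin n) (Fin n) ℝ) from diagonal_one,
      Matrix.mul_one, hU2 hL]
  have e5 : diagonal (fun _ => (1:ℝ)) + γ • diagonal (fun i => (k + lam i)^2)
      = diagonal (fun i => 1 + γ * (k + lam i)^2) := by
    rw [← diagonal_smul, diagonal_add]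
    congr 1
  rw [e3, ← Matrix.smul_mul, ← Matrix.mul_smul]
  conv_lhs => rw [e4]
  rw [← Matrix.add_mul, ← Matrix.mul_add, e5]

lemma A_posSemidef {L : Matrix (Fin n) (Fin n) ℝ} (hL : L.IsHermitian) {γ : ℝ} (hγ : 0 < γ)
    (k : ℝ) :
    ((1 : Matrix (Fin n) (Fin n) ℝ)
      + γ • (k • (1 : Matrix (Fin n) (Fin n) ℝ) + L) ^ 2).PosSemidef := by
  rw [A_repr hL γ k]
  have hd : Matrix.PosSemidef (diagonal (fun i => 1 + γ * (k + hL.eigenvalues i)^2)) :=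
    Matrix.PosSemidef.diagonal fun i => by positivity
  have := hd.mul_mul_conjTranspose_same (hL.eigenvectorUnitary : Matrix (Fin n) (Fin n) ℝ)
  rwa [conjTranspose_eq_transpose_of_trivial] at this

lemma invSqrt_A {L : Matrix (Fin n) (Fin n) ℝ} (hL : L.IsHermitian) {γ : ℝ} (hγ : 0 < γ)
    (k : ℝ) :
    invSqrt ((1 : Matrix (Fin n) (Fin n) ℝ)
        + γ • (k • (1 : Matrix (Fin n) (Fin n) ℝ) + L) ^ 2)
      = (hL.eigenvectorUnitary : Matrix (Fin n) (Fin n) ℝ)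
        * diagonal (fun i => hh γ (k + hL.eigenvalues i))
        * (hL.eigenvectorUnitary : Matrix (Fin n) (Fin n) ℝ)ᵀ := by
  set U : Matrix (Fin n) (Fin n) ℝ := (hL.eigenvectorUnitary : Matrix (Fin n) (Fin n) ℝ) with hU
  set lam := hL.eigenvalues with hlam
  have hpos : ∀ i, (0:ℝ) < 1 + γ * (k + lam i)^2 := fun i => by positivity
  have hA := A_posSemidef hL hγ k
  rw [invSqrt, dif_pos hA]
  have hSrep : Matrix.PosSemidef
      (U * diagonal (fun i => Real.sqrt (1 + γ * (k + lam i)^2)) * Uᵀ) := by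
    have hd : Matrix.PosSemidef (diagonal (fun i => Real.sqrt (1 + γ * (k + lam i)^2))) :=
      Matrix.PosSemidef.diagonal fun i => Real.sqrt_nonneg _
    have := hd.mul_mul_conjTranspose_same U
    rwa [conjTranspose_eq_transpose_of_trivial] at this
  have hsq : (U * diagonal (fun i => Real.sqrt (1 + γ * (k + lam i)^2)) * Uᵀ) ^ 2
      = (1 : Matrix (Fin n) (Fin n) ℝ) + γ • (k • (1 : Matrix (Fin n) (Fin n) ℝ) + L) ^ 2 := by
    rw [pow_two, conj_diag_mul (hU1 hL), A_repr hL γ k]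
    have : (fun i => Real.sqrt (1 + γ * (k + lam i)^2) * Real.sqrt (1 + γ * (k + lam i)^2))
        = fun i => 1 + γ * (k + lam i)^2 := by
      funext i
      exact Real.mul_self_sqrt (hpos i).le
    rw [this]
  have hcfc : (hA.1.eigenvectorUnitary.1 * diagonal ((↑) ∘ (√·) ∘ hA.1.eigenvalues) *
      (star hA.1.eigenvectorUnitary : Matrix (Fin n) (Fin n) ℝ))
        = cfc Real.sqrt ((1 : Matrix (Fin n) (Fin n) ℝ)
          + γ • (k • (1 : Matrix (Fin n) (Fin n) ℝ) + L) ^ 2) := by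
    rw [hA.1.cfc_eq, Matrix.IsHermitian.cfc, Unitary.conjStarAlgAut_apply]; rfl
  have hsqrt : cfc Real.sqrt ((1 : Matrix (Fin n) (Fin n) ℝ)
          + γ • (k • (1 : Matrix (Fin n) (Fin n) ℝ) + L) ^ 2)
        = U * diagonal (fun i => Real.sqrt (1 + γ * (k + lam i)^2)) * Uᵀ := by
    have e2 : (1 : Matrix (Fin n) (Fin n) ℝ) + γ • (k • (1 : Matrix (Fin n) (Fin n) ℝ) + L) ^ 2
        = cfc (fun x => 1 + γ * (k + x)^2) L := by
      rw [hL.cfc_eq, Matrix.IsHermitian.cfc, Unitary.conjStarAlgAut_apply, A_repr hL γ k,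
        star_eigU hL]; rfl
    rw [e2, ← cfc_comp Real.sqrt (fun x => 1 + γ * (k + x)^2) L
      (ha := show IsSelfAdjoint L from hL), hL.cfc_eq, Matrix.IsHermitian.cfc,
      Unitary.conjStarAlgAut_apply, star_eigU hL]; rfl
  rw [hcfc, hsqrt]
  apply Matrix.inv_eq_right_inv
  rw [conj_diag_mul (hU1 hL)]
  have : (fun i => Real.sqrt (1 + γ * (k + lam i)^2) * hh γ (k + lam i)) = fun _ => (1:ℝ) := by
    funext i
    rw [hh]
    exact mul_inv_cancel₀ (Real.sqrt_pos.mpr (hpos i)).ne'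
  rw [this, show diagonal (fun _ => (1:ℝ)) = (1 : Matrix (Fin n) (Fin n) ℝ) from diagonal_one,
    Matrix.mul_one, hU2 hL]

lemma eig_mem {L : Matrix (Fin n) (Fin n) ℝ} (hL : L.IsHermitian) (hNeg : (-L).PosSemidef)
    (hShift : (L + (4 : ℝ) • (1 : Matrix (Fin n) (Fin n) ℝ)).PosSemidef) (i : Fin n) :
    hL.eigenvalues i ∈ Set.Icc (-4 : ℝ) 0 := by
  set v : Fin n → ℝ := ⇑(hL.eigenvectorBasis i) with hv
  have hmv : L *ᵥ v = hL.eigenvalues i • v := hL.mulVec_eigenvectorBasis i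
  have hstar : star v = v := by funext j; simp [hv]
  have hnorm : v ⬝ᵥ v = 1 := by
    have h1 : ‖hL.eigenvectorBasis i‖ = 1 := hL.eigenvectorBasis.orthonormal.1 i
    have h2 : ‖hL.eigenvectorBasis i‖ = Real.sqrt (∑ j, ‖v j‖^2) :=
      EuclideanSpace.norm_eq _
    have h3 : ∑ j, ‖v j‖^2 = v ⬝ᵥ v := by
      simp [dotProduct, Real.norm_eq_abs, sq_abs, sq]
    rw [h2, h3] at h1
    have hvv : (0:ℝ) ≤ v ⬝ᵥ v := Finset.sum_nonneg fun j _ => mul_self_nonneg _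
    nlinarith [Real.sq_sqrt hvv, h1]
  constructor
  · have := hShift.dotProduct_mulVec_nonneg v
    rw [hstar, Matrix.add_mulVec, hmv, Matrix.smul_mulVec, Matrix.one_mulVec,
      dotProduct_add, dotProduct_smul, dotProduct_smul] at this
    simp only [smul_eq_mul, hnorm] at this
    linarith
  · have := hNeg.dotProduct_mulVec_nonneg v
    rw [Matrix.neg_mulVec, hmv, hstar, dotProduct_neg, dotProduct_smul] at this
    simp only [smul_eq_mul, hnorm] at this
    linarith

/-! ### Main one-sided bound -/

lemma main_bound {T : ℕ} {L : Matrix (Fin n) (Fin n) ℝ} (hL : L.IsHermitian)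
    (hNeg : (-L).PosSemidef)
    (hShift : (L + (4 : ℝ) • (1 : Matrix (Fin n) (Fin n) ℝ)).PosSemidef)
    {γ : ℝ} (hγ : 0 < γ) (Z : Matrix (Fin n) (Fin T) ℝ)
    {c : ℝ} (hc0 : 0 ≤ c) (hc : ∀ t ∈ Set.Icc (-4:ℝ) 4, |hd γ t| ≤ c)
    {k k' : ℝ} (hk : k ∈ Set.Icc (0:ℝ) 4) (hk' : k' ∈ Set.Icc (0:ℝ) 4) :
    specNorm (invSqrt ((1 : Matrix (Fin n) (Fin n) ℝ)
        + γ • (k • (1 : Matrix (Fin n) (Fin n) ℝ) + L) ^ 2) * Z)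
      ≤ specNorm (invSqrt ((1 : Matrix (Fin n) (Fin n) ℝ)
        + γ • (k' • (1 : Matrix (Fin n) (Fin n) ℝ) + L) ^ 2) * Z)
        + c * specNorm Z * |k - k'| := by
  set U : Matrix (Fin n) (Fin n) ℝ := (hL.eigenvectorUnitary : Matrix (Fin n) (Fin n) ℝ) with hU
  set lam := hL.eigenvalues with hlam
  have hdiffbound : ∀ i, |hh γ (k + lam i) - hh γ (k' + lam i)| ≤ c * |k - k'| := by
    intro i
    have hmem := eig_mem hL hNeg hShift i
    have h1 : k + lam i ∈ Set.Icc (-4:ℝ) 4 :=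
      ⟨by linarith [hk.1, hmem.1], by linarith [hk.2, hmem.2]⟩
    have h1' : k' + lam i ∈ Set.Icc (-4:ℝ) 4 :=
      ⟨by linarith [hk'.1, hmem.1], by linarith [hk'.2, hmem.2]⟩
    have := hh_lip hγ hc h1 h1'
    rwa [show (k + lam i) - (k' + lam i) = k - k' by ring] at this
  apply specNorm_le
  intro x hx
  rw [← mulVec_mulVec]
  have hsplit : invSqrt ((1 : Matrix (Fin n) (Fin n) ℝ)
        + γ • (k • (1 : Matrix (Fin n) (Fin n) ℝ) + L) ^ 2) *ᵥ (Z *ᵥ x)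
      = invSqrt ((1 : Matrix (Fin n) (Fin n) ℝ)
          + γ • (k' • (1 : Matrix (Fin n) (Fin n) ℝ) + L) ^ 2) *ᵥ (Z *ᵥ x)
        + (U * diagonal (fun i => hh γ (k + lam i) - hh γ (k' + lam i)) * Uᵀ) *ᵥ (Z *ᵥ x) := by
    rw [← Matrix.add_mulVec, invSqrt_A hL hγ k, invSqrt_A hL hγ k']
    have hdg : diagonal (fun i => hh γ (k' + lam i))
          + diagonal (fun i => hh γ (k + lam i) - hh γ (k' + lam i))
        = diagonal (fun i => hh γ (k + lam i)) := by
      have hfun : (fun i => hh γ (k' + lam i) + (hh γ (k + lam i) - hh γ (k' + lam i)))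
          = (fun i => hh γ (k + lam i)) := by
        funext i
        exact add_sub_cancel (hh γ (k' + lam i)) (hh γ (k + lam i))
      rw [diagonal_add, hfun]
    rw [← hdg, Matrix.mul_add, Matrix.add_mul]
  rw [hsplit]
  calc euclNorm (invSqrt ((1 : Matrix (Fin n) (Fin n) ℝ)
          + γ • (k' • (1 : Matrix (Fin n) (Fin n) ℝ) + L) ^ 2) *ᵥ (Z *ᵥ x)
        + (U * diagonal (fun i => hh γ (k + lam i) - hh γ (k' + lam i)) * Uᵀ) *ᵥ (Z *ᵥ x))
      ≤ euclNorm (invSqrt ((1 : Matrix (Fin n) (Fin n) ℝ)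
          + γ • (k' • (1 : Matrix (Fin n) (Fin n) ℝ) + L) ^ 2) *ᵥ (Z *ᵥ x))
        + euclNorm ((U * diagonal (fun i => hh γ (k + lam i) - hh γ (k' + lam i)) * Uᵀ)
            *ᵥ (Z *ᵥ x)) := euclNorm_add_le _ _
    _ ≤ specNorm (invSqrt ((1 : Matrix (Fin n) (Fin n) ℝ)
          + γ • (k' • (1 : Matrix (Fin n) (Fin n) ℝ) + L) ^ 2) * Z)
        + c * specNorm Z * |k - k'| := by
        apply add_le_add
        · rw [mulVec_mulVec]
          exact le_specNorm _ hx
        · calc euclNorm ((U * diagonal (fun i => hh γ (k + lam i) - hh γ (k' + lam i)) * Uᵀ)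
                *ᵥ (Z *ᵥ x))
              ≤ (c * |k - k'|) * euclNorm (Z *ᵥ x) :=
                euclNorm_conj_mulVec_le (hU1 hL) (hU2 hL) (by positivity) hdiffbound _
            _ ≤ (c * |k - k'|) * specNorm Z :=
                mul_le_mul_of_nonneg_left (le_specNorm _ hx) (by positivity)
            _ = c * specNorm Z * |k - k'| := by ring

end Spec

end Stmt12Aux

open Stmt12Aux

/-- Lipschitz bound for `f(k̄) = ‖(I + γ(k̄ I + L)²)^{-1/2} Z‖₂` on `[0,4]`
when the eigenvalues of symmetric `L` lie in `[-4, 0]`. -/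
theorem stmt12 {n T : ℕ} (L : Matrix (Fin n) (Fin n) ℝ) (hSymm : L.IsSymm)
    (hNeg : (-L).PosSemidef)
    (hShift : (L + (4 : ℝ) • (1 : Matrix (Fin n) (Fin n) ℝ)).PosSemidef)
    (γ : ℝ) (hγ : 0 < γ) (Z : Matrix (Fin n) (Fin T) ℝ)
    (f : ℝ → ℝ)
    (hf : ∀ k : ℝ, f k = specNorm (invSqrt ((1 : Matrix (Fin n) (Fin n) ℝ)
        + γ • (k • (1 : Matrix (Fin n) (Fin n) ℝ) + L) ^ 2) * Z)) :
    (∀ k ∈ Set.Icc (0 : ℝ) 4, ∀ k' ∈ Set.Icc (0 : ℝ) 4,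
      |f k - f k'| ≤
        (if 1 / 32 ≤ γ then 2 / (3 * Real.sqrt 3) * Real.sqrt γ * specNorm Z
          else 4 * γ * (1 + 16 * γ) ^ (-(3/2) : ℝ) * specNorm Z)
        * |k - k'|) ∧
    (∀ k ∈ Set.Icc (0 : ℝ) 4, ∀ k' ∈ Set.Icc (0 : ℝ) 4,
      |f k - f k'| ≤ 2 / (3 * Real.sqrt 3) * Real.sqrt γ * specNorm Z * |k - k'|) := by
  have hL : L.IsHermitian := by
    show Lᴴ = L
    rw [conjTranspose_eq_transpose_of_trivial]
    exact hSymm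
  have habs : ∀ c : ℝ, 0 ≤ c → (∀ t ∈ Set.Icc (-4:ℝ) 4, |hd γ t| ≤ c) →
      ∀ k ∈ Set.Icc (0 : ℝ) 4, ∀ k' ∈ Set.Icc (0 : ℝ) 4,
        |f k - f k'| ≤ c * specNorm Z * |k - k'| := by
    intro c hc0 hc k hk k' hk'
    rw [hf k, hf k', abs_sub_le_iff]
    constructor
    · have := main_bound hL hNeg hShift hγ Z hc0 hc hk hk'
      linarith
    · have := main_bound hL hNeg hShift hγ Z hc0 hc hk' hk
      rw [abs_sub_comm k' k] at this
      linarith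
  have hglob : ∀ t ∈ Set.Icc (-4:ℝ) 4, |hd γ t| ≤ 2 / (3 * Real.sqrt 3) * Real.sqrt γ :=
    fun t _ => bound_global hγ t
  have hglob0 : (0:ℝ) ≤ 2 / (3 * Real.sqrt 3) * Real.sqrt γ := by positivity
  constructor
  · intro k hk k' hk'
    by_cases h32 : 1 / 32 ≤ γ
    · rw [if_pos h32]
      exact habs _ hglob0 hglob k hk k' hk'
    · rw [if_neg h32]
      push_neg at h32
      have hc0 : (0:ℝ) ≤ 4 * γ * (1 + 16 * γ) ^ (-(3/2) : ℝ) :=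
        mul_nonneg (by linarith) (Real.rpow_nonneg (by linarith) _)
      refine habs _ hc0 (fun t ht => ?_) k hk k' hk'
      exact bound_small hγ (le_of_lt h32) (abs_le.mpr ⟨ht.1, ht.2⟩)
  · intro k hk k' hk'
    exact habs _ hglob0 hglob k hk k' hk'
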